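/- Let π = 𝒢_0 →(P_1,R_1) 𝒢_1 →(P_2,R_2) ⋯ →(P_k,R_k) 𝒢_k be a sequence of refinement steps and let R be an entry region of 𝒢_k such that R ⊄ preflow_F(R_1). Then there exists a sequence of refinement steps starting from 𝒢_0 whose steps form a subsequence of (P_1,R_1), …, (P_k,R_k) containing no step whose entry region equals R_1, such that R is an entry region of its final family. -/

import Mathlib

open Set

/-- Points of `ℝ^n`. -/
abbrev Vec (n : ℕ) := Fin n → ℝ

/-- A (strict or non-strict) affine half-space of `ℝ^ι`. -/
def IsHalfspace {ι : Type} [Fintype ι] (H : Set (ι → ℝ)) : Prop :=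
  ∃ (a : ι → ℝ) (b : ℝ), H = {x | (∑ i, a i * x i) < b} ∨ H = {x | (∑ i, a i * x i) ≤ b}

/-- A convex polyhedron: a finite intersection of half-spaces. -/
def IsConvexPolyhedron {ι : Type} [Fintype ι] (P : Set (ι → ℝ)) : Prop :=
  ∃ (k : ℕ) (Hs : Fin k → Set (ι → ℝ)), (∀ i, IsHalfspace (Hs i)) ∧ P = ⋂ i, Hs i

/-- A polyhedron: a finite union of convex polyhedra. -/
def IsPolyhedron {ι : Type} [Fintype ι] (G : Set (ι → ℝ)) : Prop :=
  ∃ (k : ℕ) (Ps : Fin k → Set (ι → ℝ)), (∀ i, IsConvexPolyhedron (Ps i)) ∧ G = ⋃ i, Ps i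

/-- The pre-flow of `G` with respect to `F`:
`preflow_F(G) = {u | ∃ δ ≥ 0, ∃ c ∈ F, u + δ·c ∈ G}`. -/
def preflow {n : ℕ} (F G : Set (Vec n)) : Set (Vec n) :=
  {u | ∃ δ : ℝ, 0 ≤ δ ∧ ∃ c ∈ F, u + δ • c ∈ G}

/-- The boundary of two sets: `bound(G, G') = (closure G ∩ G') ∪ (G ∩ closure G')`. -/
def bnd {n : ℕ} (G G' : Set (Vec n)) : Set (Vec n) :=
  (closure G ∩ G') ∪ (G ∩ closure G')

/-- `prwa_F(U, V)`: the points from which a piecewise straight-line trajectory with slopes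
in `F` reaches `U`, every point along the way (except possibly the final one) lying in
`(ℝ^n \ V) ∪ U`. -/
def prwa {n : ℕ} (F U V : Set (Vec n)) : Set (Vec n) :=
  {u | ∃ (k : ℕ) (d : Fin k → ℝ) (c : Fin k → Vec n) (p : Fin (k + 1) → Vec n),
    (∀ i, 0 ≤ d i) ∧ (∀ i, c i ∈ F) ∧ p 0 = u ∧
    (∀ i : Fin k, p i.succ = p i.castSucc + d i • c i) ∧
    p (Fin.last k) ∈ U ∧
    ∀ (i : Fin k) (t : ℝ), 0 ≤ t → t ≤ d i →
      p i.castSucc + t • c i = p (Fin.last k) ∨ p i.castSucc + t • c i ∈ Vᶜ ∪ U}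

/-- `rwa_F(U, V)`: the points from which some differentiable trajectory with derivative in
`F` may reach `U` while staying in `(ℝ^n \ V) ∪ U` beforehand. -/
def rwaSet {n : ℕ} (F U V : Set (Vec n)) : Set (Vec n) :=
  {u | ∃ f : ℝ → Vec n, Differentiable ℝ f ∧ f 0 = u ∧ (∀ t, 0 ≤ t → deriv f t ∈ F) ∧
    ∃ δ : ℝ, 0 ≤ δ ∧ f δ ∈ U ∧ ∀ δ', 0 ≤ δ' → δ' < δ → f δ' ∈ Vᶜ ∪ U}

/-- `R` is an entry region of the family `𝒢` from the convex polyhedron `P ∈ 𝒫`: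
a nonempty set `R = bound(P, Q) ∩ preflow_F(Q)` for some `Q ∈ 𝒢`. -/
def IsEntryRegionFrom {n : ℕ} (F : Set (Vec n)) (GG : Set (Set (Vec n)))
    (P R : Set (Vec n)) : Prop :=
  R.Nonempty ∧ ∃ Q ∈ GG, R = bnd P Q ∩ preflow F Q

/-- `R` is an entry region of the family `𝒢` (w.r.t. the family `𝒫`):
a nonempty set `R = bound(P, Q) ∩ preflow_F(Q)` with `P ∈ 𝒫` and `Q ∈ 𝒢`. -/
def IsEntryRegion {n : ℕ} (F : Set (Vec n)) (PP GG : Set (Set (Vec n)))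
    (R : Set (Vec n)) : Prop :=
  ∃ P ∈ PP, IsEntryRegionFrom F GG P R

/-- The refinement step `𝒢 →(P,R) 𝒢'`: `P ∈ 𝒫`, `R` is an entry region of `𝒢` from `P`,
and `𝒢' = 𝒢 ∪ {P ∩ preflow_F(R)}`. -/
def RefStep {n : ℕ} (F : Set (Vec n)) (PP : Set (Set (Vec n)))
    (GG : Set (Set (Vec n))) (P R : Set (Vec n)) (GG' : Set (Set (Vec n))) : Prop :=
  P ∈ PP ∧ IsEntryRegionFrom F GG P R ∧ GG' = GG ∪ {P ∩ preflow F R}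

/-- Pruning lemma: if `π = 𝒢_0 →(P_1,R_1) ⋯ →(P_k,R_k) 𝒢_k` is a
sequence of refinement steps and `R` is an entry region of `𝒢_k` with
`R ⊄ preflow_F(R_1)`, then there is a sequence of refinement steps from `𝒢_0` whose
steps form a subsequence of those of `π` containing no step whose entry region equals
`R_1`, such that `R` is an entry region of its final family. -/

lemma preflow_mono' {n : ℕ} (F : Set (Vec n)) {A B : Set (Vec n)} (h : A ⊆ B) :
    preflow F A ⊆ preflow F B := by
  rintro u ⟨δ, hδ, c, hc, hm⟩
  exact ⟨δ, hδ, c, hc, h hm⟩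

lemma convex_of_isConvexPolyhedron' {ι : Type} [Fintype ι] {P : Set (ι → ℝ)}
    (h : IsConvexPolyhedron P) : Convex ℝ P := by
  obtain ⟨k, Hs, hHs, rfl⟩ := h
  apply convex_iInter
  intro i
  obtain ⟨a, b, h | h⟩ := hHs i <;> rw [h]
  · exact convex_halfSpace_lt
      ⟨fun x y => by simp [mul_add, Finset.sum_add_distrib],
       fun c x => by
        simp only [Pi.smul_apply, smul_eq_mul, Finset.mul_sum]
        exact Finset.sum_congr rfl fun i _ => by ring⟩ b
  · exact convex_halfSpace_le
      ⟨fun x y => by simp [mul_add, Finset.sum_add_distrib],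
       fun c x => by
        simp only [Pi.smul_apply, smul_eq_mul, Finset.mul_sum]
        exact Finset.sum_congr rfl fun i _ => by ring⟩ b

lemma preflow_preflow' {n : ℕ} {F : Set (Vec n)} (hF : Convex ℝ F) (A : Set (Vec n)) :
    preflow F (preflow F A) ⊆ preflow F A := by
  rintro u ⟨δ, hδ, c, hc, δ', hδ', c', hc', hm⟩
  rcases eq_or_lt_of_le (add_nonneg hδ hδ' : (0:ℝ) ≤ δ + δ') with h0 | hpos
  · have hδ0 : δ = 0 := by linarith
    have hδ'0 : δ' = 0 := by linarith
    refine ⟨0, le_refl _, c, hc, ?_⟩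
    simpa [hδ0, hδ'0] using hm
  · have hne : δ + δ' ≠ 0 := ne_of_gt hpos
    refine ⟨δ + δ', le_of_lt hpos, (δ/(δ+δ')) • c + (δ'/(δ+δ')) • c', ?_, ?_⟩
    · exact hF hc hc' (by positivity) (by positivity) (by field_simp)
    · have h1 : (δ + δ') * (δ / (δ + δ')) = δ := by field_simp
      have h2 : (δ + δ') * (δ' / (δ + δ')) = δ' := by field_simp
      have : u + (δ + δ') • ((δ/(δ+δ')) • c + (δ'/(δ+δ')) • c')
          = u + δ • c + δ' • c' := by
        rw [smul_add, smul_smul, smul_smul, h1, h2, add_assoc]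
      rw [this]; exact hm

theorem prune_refSeq {n : ℕ} (F : Set (Vec n)) (hF : IsConvexPolyhedron F)
    (PP : Set (Set (Vec n))) (hPPfin : PP.Finite) (hPP : ∀ P ∈ PP, IsConvexPolyhedron P)
    (G : ℕ → Set (Set (Vec n))) (Ps Rs : ℕ → Set (Vec n))
    (hG0fin : (G 0).Finite) (hG0 : ∀ Q ∈ G 0, IsConvexPolyhedron Q)
    (k : ℕ) (hk : 0 < k)
    (hstep : ∀ i < k, RefStep F PP (G i) (Ps i) (Rs i) (G (i + 1)))
    (R : Set (Vec n)) (hR : IsEntryRegion F PP (G k) R)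
    (hnsub : ¬ R ⊆ preflow F (Rs 0)) :
    ∃ (m : ℕ) (ι : ℕ → ℕ) (G' : ℕ → Set (Set (Vec n))),
      (∀ j < m, ι j < k) ∧
      (∀ j₁ j₂, j₁ < j₂ → j₂ < m → ι j₁ < ι j₂) ∧
      (∀ j < m, Rs (ι j) ≠ Rs 0) ∧
      G' 0 = G 0 ∧
      (∀ j < m, RefStep F PP (G' j) (Ps (ι j)) (Rs (ι j)) (G' (j + 1))) ∧
      IsEntryRegion F PP (G' m) R := by
  have hFc : Convex ℝ F := convex_of_isConvexPolyhedron' hF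
  have key : ∀ i, i ≤ k → ∀ Q ∈ G i, ¬ preflow F Q ⊆ preflow F (Rs 0) →
      ∃ (m : ℕ) (ι : ℕ → ℕ) (G' : ℕ → Set (Set (Vec n))),
        (∀ j < m, ι j < i) ∧
        (∀ j₁ j₂, j₁ < j₂ → j₂ < m → ι j₁ < ι j₂) ∧
        (∀ j < m, Rs (ι j) ≠ Rs 0) ∧
        G' 0 = G 0 ∧
        (∀ j < m, RefStep F PP (G' j) (Ps (ι j)) (Rs (ι j)) (G' (j + 1))) ∧
        Q ∈ G' m := by
    intro i
    induction i with
    | zero =>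
      intro _ Q hQ _
      exact ⟨0, fun _ => 0, fun _ => G 0, by omega, by omega, by omega, rfl, by omega, hQ⟩
    | succ i' ih =>
      intro hik Q hQ hQns
      have hstep' := hstep i' (by omega)
      obtain ⟨hPmem, ⟨hRne, Q', hQ'mem, hRseq⟩, hGeq⟩ := hstep'
      rw [hGeq] at hQ
      rcases hQ with hQ | hQ
      · obtain ⟨m, ι, G', h1, h2, h3, h4, h5, h6⟩ := ih (by omega) Q hQ hQns
        exact ⟨m, ι, G', fun j hj => lt_trans (h1 j hj) (by omega), h2, h3, h4, h5, h6⟩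
      · -- Q = Ps i' ∩ preflow F (Rs i')
        have hQeq : Q = Ps i' ∩ preflow F (Rs i') := hQ
        have hQsub : preflow F Q ⊆ preflow F (Rs i') := by
          refine (preflow_mono' F ?_).trans (preflow_preflow' hFc _)
          rw [hQeq]; exact Set.inter_subset_right
        have hRsub : preflow F (Rs i') ⊆ preflow F Q' := by
          refine (preflow_mono' F ?_).trans (preflow_preflow' hFc _)
          rw [hRseq]; exact Set.inter_subset_right
        have hRs_ne : Rs i' ≠ Rs 0 := by
          intro heq
          exact hQns (by rw [← heq]; exact hQsub)
        have hQ'ns : ¬ preflow F Q' ⊆ preflow F (Rs 0) := by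
          intro h
          exact hQns ((hQsub.trans hRsub).trans h)
        obtain ⟨m, ι, G', h1, h2, h3, h4, h5, h6⟩ := ih (by omega) Q' hQ'mem hQ'ns
        refine ⟨m + 1, fun j => if j < m then ι j else i',
          fun j => if j ≤ m then G' j else G' m ∪ {Ps i' ∩ preflow F (Rs i')},
          ?_, ?_, ?_, ?_, ?_, ?_⟩
        · intro j hj
          by_cases h : j < m
          · simp only [h, if_true]; exact lt_trans (h1 j h) (by omega)
          · simp only [h, if_false]; omega
        · intro j₁ j₂ hj hjm
          by_cases h2' : j₂ < m
          · have hj1 : j₁ < m := by omega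
            simp only [hj1, h2', if_true]; exact h2 j₁ j₂ hj h2'
          · have hj2 : j₂ = m := by omega
            have hj1 : j₁ < m := by omega
            simp only [hj1, if_true, hj2, lt_irrefl, if_false]
            exact h1 j₁ hj1
        · intro j hj
          by_cases h : j < m
          · simp only [h, if_true]; exact h3 j h
          · simp only [h, if_false]; exact hRs_ne
        · simp only [Nat.zero_le, if_true]
          exact h4
        · intro j hj
          by_cases h : j < m
          · have hj1 : j ≤ m := by omega
            have hj2 : j + 1 ≤ m := by omega
            simp only [h, if_true, hj1, hj2]
            exact h5 j h
          · have hjm : j = m := by omega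
            simp only [hjm, lt_irrefl, if_false, le_refl, if_true]
            have : ¬ (m + 1 ≤ m) := by omega
            simp only [this, if_false]
            exact ⟨hPmem, ⟨hRne, Q', h6, hRseq⟩, rfl⟩
        · have : ¬ (m + 1 ≤ m) := by omega
          simp only [this, if_false]
          rw [hQeq]
          exact Set.mem_union_right _ rfl
  obtain ⟨P, hP, hRne, Q, hQk, hReq⟩ := hR
  have hRQ : R ⊆ preflow F Q := by rw [hReq]; exact Set.inter_subset_right
  have hQns : ¬ preflow F Q ⊆ preflow F (Rs 0) := fun h => hnsub (hRQ.trans h)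
  obtain ⟨m, ι, G', h1, h2, h3, h4, h5, h6⟩ := key k le_rfl Q hQk hQns
  exact ⟨m, ι, G', h1, h2, h3, h4, h5, P, hP, hRne, Q, h6, hReq⟩
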